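/- Let r,s,t,u be positive integers with ru−st = ±1. Then the abelianization of G(r,s,t,u) is isomorphic to ℤ/4tℤ × ℤ/4ℤ if s is odd, and to ℤ/4tℤ × ℤ/2ℤ × ℤ/2ℤ if s is even. -/

import Mathlib

/-- The relators of the presentation of the fundamental group of the sapphire
Sol 3-manifold determined by the matrix `[[r, s], [t, u]]`:
`a·b·a⁻¹·b`, `c²·a^(−2r)·b^(−s)` and `c·a^(2t)·b^u·c⁻¹·a^(2t)·b^u`,
where `a, b, c` are the generators `of 0, of 1, of 2`. -/
def sapphireRels (r s t u : ℤ) : Set (FreeGroup (Fin 3)) :=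
  { FreeGroup.of 0 * FreeGroup.of 1 * (FreeGroup.of 0)⁻¹ * FreeGroup.of 1,
    FreeGroup.of 2 ^ (2 : ℤ) * FreeGroup.of 0 ^ (-(2 * r)) * FreeGroup.of 1 ^ (-s),
    FreeGroup.of 2 * FreeGroup.of 0 ^ (2 * t) * FreeGroup.of 1 ^ u * (FreeGroup.of 2)⁻¹ *
      FreeGroup.of 0 ^ (2 * t) * FreeGroup.of 1 ^ u }

/-- The fundamental group `G(r,s,t,u)` of the sapphire Sol 3-manifold. -/
abbrev SapphireGroup (r s t u : ℤ) := PresentedGroup (sapphireRels r s t u)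

private lemma sapphire_mk_eq_one (r s t u : ℤ) {w : FreeGroup (Fin 3)}
    (hw : w ∈ sapphireRels r s t u) : PresentedGroup.mk (sapphireRels r s t u) w = 1 :=
  (QuotientGroup.eq_one_iff w).2 (Subgroup.subset_normalClosure hw)

private lemma sapphire_odd (r s t u : ℤ) (ht : 0 < t) (hs : Odd s) :
    Nonempty (Abelianization (SapphireGroup r s t u) ≃*
      Multiplicative (ZMod (4 * t).toNat × ZMod 4)) := by
  set N := (4 * t).toNat with hNdef
  have hN : ((N : ℕ) : ℤ) = 4 * t := Int.toNat_of_nonneg (by linarith)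
  -- generators and relations in the abelianization
  set φ : FreeGroup (Fin 3) →* (Abelianization (SapphireGroup r s t u)) := Abelianization.of.comp (PresentedGroup.mk _) with hφ
  have key : ∀ w ∈ sapphireRels r s t u, φ w = 1 := by
    intro w hw
    rw [hφ, MonoidHom.comp_apply, sapphire_mk_eq_one r s t u hw, map_one]
  have h1 := key _ (Set.mem_insert _ _)
  have h2 := key _ (Set.mem_insert_iff.2 (Or.inr (Set.mem_insert _ _)))
  have h3 := key _ (Set.mem_insert_iff.2 (Or.inr (Set.mem_insert_iff.2 (Or.inr rfl))))
  simp only [map_mul, map_inv, map_zpow] at h1 h2 h3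
  set x := Additive.ofMul (φ (FreeGroup.of 0)) with hx0
  set y := Additive.ofMul (φ (FreeGroup.of 1)) with hy0
  set z := Additive.ofMul (φ (FreeGroup.of 2)) with hz0
  have h1' := congrArg Additive.ofMul h1
  have h2' := congrArg Additive.ofMul h2
  have h3' := congrArg Additive.ofMul h3
  simp only [ofMul_mul, ofMul_inv, ofMul_zpow, ofMul_one, ← hx0, ← hy0, ← hz0] at h1' h2' h3'
  have hy : (2:ℤ) • y = 0 := by linear_combination (norm := module) h1'
  have hx : (4*t) • x = 0 := by linear_combination (norm := module) h3' - u • h1'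
  have hz : (2:ℤ) • z = (2*r) • x + s • y := by linear_combination (norm := module) h2'
  obtain ⟨k, hk⟩ := hs
  have hsy : s • y = y := by linear_combination (norm := module) k • hy + hk • y
  -- the forward homomorphism
  set v : Fin 3 → ZMod N × ZMod 4 := ![(1, 0), (0, 2), ((r : ZMod N), 1)] with hv
  have h4t : ((4*t : ℤ) : ZMod N) = 0 := by
    rw [ZMod.intCast_zmod_eq_zero_iff_dvd, hN]
  have h4 : ((4 : ℤ) : ZMod 4) = 0 := by decide
  push_cast at h4t h4
  have hf : ∀ w ∈ sapphireRels r s t u,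
      FreeGroup.lift (fun i => Multiplicative.ofAdd (v i)) w = 1 := by
    intro w hw
    rcases hw with rfl | rfl | rfl
    · simp only [map_mul, map_inv, map_zpow, FreeGroup.lift_apply_of, hv, Matrix.cons_val_zero,
        Matrix.cons_val_one, Matrix.head_cons]
      apply Multiplicative.toAdd.injective
      simp only [toAdd_mul, toAdd_inv, toAdd_zpow, toAdd_ofAdd, toAdd_one]
      refine Prod.ext ?_ ?_ <;>
        simp only [Prod.fst_add, Prod.snd_add, Prod.fst_neg, Prod.snd_neg, Prod.smul_mk,
          Prod.mk_add_mk, Prod.neg_mk, Prod.fst, Prod.snd, zsmul_eq_mul, smul_eq_mul,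
          Prod.fst_zero, Prod.snd_zero]
      · ring
      · linear_combination h4
    · simp only [map_mul, map_inv, map_zpow, FreeGroup.lift_apply_of, hv, Matrix.cons_val_zero,
        Matrix.cons_val_one, Matrix.head_cons, Matrix.cons_val_two, Matrix.tail_cons]
      apply Multiplicative.toAdd.injective
      simp only [toAdd_mul, toAdd_inv, toAdd_zpow, toAdd_ofAdd, toAdd_one]
      refine Prod.ext ?_ ?_ <;>
        simp only [Prod.fst_add, Prod.snd_add, Prod.fst_neg, Prod.snd_neg, Prod.smul_mk,
          Prod.mk_add_mk, Prod.neg_mk, Prod.fst, Prod.snd, zsmul_eq_mul, smul_eq_mul,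
          Prod.fst_zero, Prod.snd_zero] <;>
        push_cast [hk]
      · ring
      · linear_combination (-(k : ZMod 4)) * h4
    · simp only [map_mul, map_inv, map_zpow, FreeGroup.lift_apply_of, hv, Matrix.cons_val_zero,
        Matrix.cons_val_one, Matrix.head_cons, Matrix.cons_val_two, Matrix.tail_cons]
      apply Multiplicative.toAdd.injective
      simp only [toAdd_mul, toAdd_inv, toAdd_zpow, toAdd_ofAdd, toAdd_one]
      refine Prod.ext ?_ ?_ <;>
        simp only [Prod.fst_add, Prod.snd_add, Prod.fst_neg, Prod.snd_neg, Prod.smul_mk,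
          Prod.mk_add_mk, Prod.neg_mk, Prod.fst, Prod.snd, zsmul_eq_mul, smul_eq_mul,
          Prod.fst_zero, Prod.snd_zero] <;>
        push_cast
      · linear_combination h4t
      · linear_combination (u : ZMod 4) * h4
  set Φ : (Abelianization (SapphireGroup r s t u)) →* (Multiplicative (ZMod N × ZMod 4)) := Abelianization.lift (PresentedGroup.toGroup hf) with hΦ
  -- the backward homomorphism
  set w : Additive (Abelianization (SapphireGroup r s t u)) := z - r • x with hw0
  have pX : (zmultiplesHom (Additive (Abelianization (SapphireGroup r s t u))) x) ((N : ℕ) : ℤ) = 0 := by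
    rw [zmultiplesHom_apply, hN]; exact hx
  have pW : (zmultiplesHom (Additive (Abelianization (SapphireGroup r s t u))) w) (((4:ℕ) : ℕ) : ℤ) = 0 := by
    rw [zmultiplesHom_apply, hw0]
    push_cast
    linear_combination (norm := module) (2:ℤ) • hz + s • hy
  set Ψ' : ZMod N × ZMod 4 →+ Additive (Abelianization (SapphireGroup r s t u)) :=
    (ZMod.lift N ⟨zmultiplesHom (Additive (Abelianization (SapphireGroup r s t u))) x, pX⟩).coprod
      (ZMod.lift 4 ⟨zmultiplesHom (Additive (Abelianization (SapphireGroup r s t u))) w, pW⟩) with hΨ'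
  set Ψ : (Multiplicative (ZMod N × ZMod 4)) →* (Abelianization (SapphireGroup r s t u)) :=
    (MulEquiv.multiplicativeAdditive (Abelianization (SapphireGroup r s t u))).toMonoidHom.comp
      (AddMonoidHom.toMultiplicative Ψ') with hΨ
  have hΨofAdd : ∀ p : ZMod N × ZMod 4, Ψ (Multiplicative.ofAdd p) = Additive.toMul (Ψ' p) :=
    fun p => rfl
  have hΨ'cast : ∀ (i j : ℤ), Ψ' ((i : ZMod N), (j : ZMod 4)) = i • x + j • w := by
    intro i j
    rw [hΨ', AddMonoidHom.coprod_apply, ZMod.lift_coe, ZMod.lift_coe]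
    rfl
  have hΦof : ∀ i : Fin 3,
      Φ (Abelianization.of (PresentedGroup.of i)) = Multiplicative.ofAdd (v i) := by
    intro i
    rw [hΦ, Abelianization.lift_apply_of, PresentedGroup.toGroup.of]
  have hleft : Ψ.comp Φ = MonoidHom.id (Abelianization (SapphireGroup r s t u)) := by
    apply Abelianization.hom_ext
    apply PresentedGroup.ext
    intro i
    fin_cases i
    · show Ψ (Φ (Abelianization.of (PresentedGroup.of 0))) = Abelianization.of (PresentedGroup.of 0)
      rw [hΦof 0, hΨofAdd]
      apply Additive.ofMul.injective
      show Ψ' (v 0) = x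
      have : v 0 = (((1:ℤ) : ZMod N), ((0:ℤ) : ZMod 4)) := by norm_num [hv]
      rw [this, hΨ'cast]
      module
    · show Ψ (Φ (Abelianization.of (PresentedGroup.of 1))) = Abelianization.of (PresentedGroup.of 1)
      rw [hΦof 1, hΨofAdd]
      apply Additive.ofMul.injective
      show Ψ' (v 1) = y
      have : v 1 = (((0:ℤ) : ZMod N), ((2:ℤ) : ZMod 4)) := by norm_num [hv]
      rw [this, hΨ'cast]
      rw [hw0]
      linear_combination (norm := module) hz + hsy
    · show Ψ (Φ (Abelianization.of (PresentedGroup.of 2))) = Abelianization.of (PresentedGroup.of 2)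
      rw [hΦof 2, hΨofAdd]
      apply Additive.ofMul.injective
      show Ψ' (v 2) = z
      have : v 2 = (((r:ℤ) : ZMod N), ((1:ℤ) : ZMod 4)) := by norm_num [hv]; rfl
      rw [this, hΨ'cast]
      rw [hw0]
      module
  have hright : Φ.comp Ψ = MonoidHom.id (Multiplicative (ZMod N × ZMod 4)) := by
    refine MonoidHom.ext fun p => ?_
    obtain ⟨i, hi⟩ := ZMod.intCast_surjective (Multiplicative.toAdd p).1
    obtain ⟨j, hj⟩ := ZMod.intCast_surjective (Multiplicative.toAdd p).2
    have hp : p = Multiplicative.ofAdd ((i : ZMod N), (j : ZMod 4)) := by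
      rw [hi, hj]
      simp
    rw [MonoidHom.comp_apply, MonoidHom.id_apply, hp, hΨofAdd, hΨ'cast]
    have htm : Additive.toMul (i • x + j • w) =
        (Additive.toMul x) ^ i * ((Additive.toMul z) / (Additive.toMul x) ^ r) ^ j := by
      rw [hw0]
      simp [toMul_add, toMul_zsmul, toMul_sub, div_eq_mul_inv]
    rw [htm]
    have hx' : Additive.toMul x = Abelianization.of (PresentedGroup.of 0) := rfl
    have hz' : Additive.toMul z = Abelianization.of (PresentedGroup.of 2) := rfl
    rw [hx', hz']
    simp only [map_mul, map_zpow, map_div, hΦof 0, hΦof 2]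
    apply Multiplicative.toAdd.injective
    simp only [toAdd_mul, toAdd_div, toAdd_zpow, toAdd_ofAdd]
    have hv0 : v 0 = (1, 0) := by norm_num [hv]
    have hv2 : v 2 = ((r : ZMod N), 1) := by norm_num [hv]; rfl
    rw [hv0, hv2]
    refine Prod.ext ?_ ?_ <;>
      simp only [Prod.smul_mk, Prod.mk_sub_mk, Prod.mk_add_mk, Prod.fst, Prod.snd,
        Prod.fst_add, Prod.snd_add, Prod.fst_sub, Prod.snd_sub, zsmul_eq_mul,
        smul_eq_mul] <;>
      push_cast <;>
      ring
  exact ⟨MonoidHom.toMulEquiv Φ Ψ hleft hright⟩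

private lemma sapphire_even (r s t u : ℤ) (ht : 0 < t) (hs : Even s) :
    Nonempty (Abelianization (SapphireGroup r s t u) ≃*
      Multiplicative (ZMod (4 * t).toNat × ZMod 2 × ZMod 2)) := by
  set N := (4 * t).toNat with hNdef
  have hN : ((N : ℕ) : ℤ) = 4 * t := Int.toNat_of_nonneg (by linarith)
  set φ : FreeGroup (Fin 3) →* (Abelianization (SapphireGroup r s t u)) :=
    Abelianization.of.comp (PresentedGroup.mk _) with hφ
  have key : ∀ w ∈ sapphireRels r s t u, φ w = 1 := by
    intro w hw
    rw [hφ, MonoidHom.comp_apply, sapphire_mk_eq_one r s t u hw, map_one]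
  have h1 := key _ (Set.mem_insert _ _)
  have h2 := key _ (Set.mem_insert_iff.2 (Or.inr (Set.mem_insert _ _)))
  have h3 := key _ (Set.mem_insert_iff.2 (Or.inr (Set.mem_insert_iff.2 (Or.inr rfl))))
  simp only [map_mul, map_inv, map_zpow] at h1 h2 h3
  set x := Additive.ofMul (φ (FreeGroup.of 0)) with hx0
  set y := Additive.ofMul (φ (FreeGroup.of 1)) with hy0
  set z := Additive.ofMul (φ (FreeGroup.of 2)) with hz0
  have h1' := congrArg Additive.ofMul h1
  have h2' := congrArg Additive.ofMul h2
  have h3' := congrArg Additive.ofMul h3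
  simp only [ofMul_mul, ofMul_inv, ofMul_zpow, ofMul_one, ← hx0, ← hy0, ← hz0] at h1' h2' h3'
  have hy : (2:ℤ) • y = 0 := by linear_combination (norm := module) h1'
  have hx : (4*t) • x = 0 := by linear_combination (norm := module) h3' - u • h1'
  have hz : (2:ℤ) • z = (2*r) • x + s • y := by linear_combination (norm := module) h2'
  obtain ⟨k, hk⟩ := hs
  have hk : s = 2 * k := by rw [hk]; ring
  -- the forward homomorphism
  set v : Fin 3 → ZMod N × ZMod 2 × ZMod 2 := ![(1, 0, 0), (0, 1, 0), ((r : ZMod N), 0, 1)]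
    with hv
  have h4t : ((4*t : ℤ) : ZMod N) = 0 := by
    rw [ZMod.intCast_zmod_eq_zero_iff_dvd, hN]
  have h2two : ((2 : ℤ) : ZMod 2) = 0 := by decide
  push_cast at h4t h2two
  have hf : ∀ w ∈ sapphireRels r s t u,
      FreeGroup.lift (fun i => Multiplicative.ofAdd (v i)) w = 1 := by
    intro w hw
    rcases hw with rfl | rfl | rfl
    · simp only [map_mul, map_inv, map_zpow, FreeGroup.lift_apply_of, hv, Matrix.cons_val_zero,
        Matrix.cons_val_one, Matrix.head_cons]
      apply Multiplicative.toAdd.injective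
      simp only [toAdd_mul, toAdd_inv, toAdd_zpow, toAdd_ofAdd, toAdd_one]
      refine Prod.ext ?_ (Prod.ext ?_ ?_) <;>
        simp only [Prod.fst_add, Prod.snd_add, Prod.fst_neg, Prod.snd_neg, Prod.smul_mk,
          Prod.mk_add_mk, Prod.neg_mk, Prod.fst, Prod.snd, zsmul_eq_mul, smul_eq_mul,
          Prod.fst_zero, Prod.snd_zero]
      · ring
      · linear_combination h2two
      · ring
    · simp only [map_mul, map_inv, map_zpow, FreeGroup.lift_apply_of, hv, Matrix.cons_val_zero,
        Matrix.cons_val_one, Matrix.head_cons, Matrix.cons_val_two, Matrix.tail_cons]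
      apply Multiplicative.toAdd.injective
      simp only [toAdd_mul, toAdd_inv, toAdd_zpow, toAdd_ofAdd, toAdd_one]
      refine Prod.ext ?_ (Prod.ext ?_ ?_) <;>
        simp only [Prod.fst_add, Prod.snd_add, Prod.fst_neg, Prod.snd_neg, Prod.smul_mk,
          Prod.mk_add_mk, Prod.neg_mk, Prod.fst, Prod.snd, zsmul_eq_mul, smul_eq_mul,
          Prod.fst_zero, Prod.snd_zero] <;>
        push_cast [hk]
      · ring
      · linear_combination (-(k : ZMod 2)) * h2two
      · linear_combination h2two
    · simp only [map_mul, map_inv, map_zpow, FreeGroup.lift_apply_of, hv, Matrix.cons_val_zero,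
        Matrix.cons_val_one, Matrix.head_cons, Matrix.cons_val_two, Matrix.tail_cons]
      apply Multiplicative.toAdd.injective
      simp only [toAdd_mul, toAdd_inv, toAdd_zpow, toAdd_ofAdd, toAdd_one]
      refine Prod.ext ?_ (Prod.ext ?_ ?_) <;>
        simp only [Prod.fst_add, Prod.snd_add, Prod.fst_neg, Prod.snd_neg, Prod.smul_mk,
          Prod.mk_add_mk, Prod.neg_mk, Prod.fst, Prod.snd, zsmul_eq_mul, smul_eq_mul,
          Prod.fst_zero, Prod.snd_zero] <;>
        push_cast
      · linear_combination h4t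
      · linear_combination (u : ZMod 2) * h2two
      · ring
  set Φ : (Abelianization (SapphireGroup r s t u)) →* (Multiplicative (ZMod N × ZMod 2 × ZMod 2)) :=
    Abelianization.lift (PresentedGroup.toGroup hf) with hΦ
  -- the backward homomorphism
  set w : Additive (Abelianization (SapphireGroup r s t u)) := z - r • x with hw0
  have pX : (zmultiplesHom (Additive (Abelianization (SapphireGroup r s t u))) x) ((N : ℕ) : ℤ) = 0 := by
    rw [zmultiplesHom_apply, hN]; exact hx
  have pY : (zmultiplesHom (Additive (Abelianization (SapphireGroup r s t u))) y) (((2:ℕ) : ℕ) : ℤ) = 0 := by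
    rw [zmultiplesHom_apply]
    push_cast
    exact hy
  have pW : (zmultiplesHom (Additive (Abelianization (SapphireGroup r s t u))) w) (((2:ℕ) : ℕ) : ℤ) = 0 := by
    rw [zmultiplesHom_apply, hw0]
    push_cast
    linear_combination (norm := module) hz + k • hy + hk • y
  set Ψ' : ZMod N × ZMod 2 × ZMod 2 →+ Additive (Abelianization (SapphireGroup r s t u)) :=
    (ZMod.lift N ⟨zmultiplesHom (Additive (Abelianization (SapphireGroup r s t u))) x, pX⟩).coprod
      ((ZMod.lift 2 ⟨zmultiplesHom (Additive (Abelianization (SapphireGroup r s t u))) y, pY⟩).coprod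
        (ZMod.lift 2 ⟨zmultiplesHom (Additive (Abelianization (SapphireGroup r s t u))) w, pW⟩)) with hΨ'
  set Ψ : (Multiplicative (ZMod N × ZMod 2 × ZMod 2)) →* (Abelianization (SapphireGroup r s t u)) :=
    (MulEquiv.multiplicativeAdditive (Abelianization (SapphireGroup r s t u))).toMonoidHom.comp
      (AddMonoidHom.toMultiplicative Ψ') with hΨ
  have hΨofAdd : ∀ p : ZMod N × ZMod 2 × ZMod 2,
      Ψ (Multiplicative.ofAdd p) = Additive.toMul (Ψ' p) := fun p => rfl
  have hΨ'cast : ∀ (i j l : ℤ), Ψ' ((i : ZMod N), (j : ZMod 2), (l : ZMod 2))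
      = i • x + (j • y + l • w) := by
    intro i j l
    rw [hΨ', AddMonoidHom.coprod_apply, AddMonoidHom.coprod_apply,
      ZMod.lift_coe, ZMod.lift_coe, ZMod.lift_coe]
    rfl
  have hΦof : ∀ i : Fin 3,
      Φ (Abelianization.of (PresentedGroup.of i)) = Multiplicative.ofAdd (v i) := by
    intro i
    rw [hΦ, Abelianization.lift_apply_of, PresentedGroup.toGroup.of]
  have hleft : Ψ.comp Φ = MonoidHom.id (Abelianization (SapphireGroup r s t u)) := by
    apply Abelianization.hom_ext
    apply PresentedGroup.ext
    intro i
    fin_cases i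
    · show Ψ (Φ (Abelianization.of (PresentedGroup.of 0))) = Abelianization.of (PresentedGroup.of 0)
      rw [hΦof 0, hΨofAdd]
      apply Additive.ofMul.injective
      show Ψ' (v 0) = x
      have : v 0 = (((1:ℤ) : ZMod N), ((0:ℤ) : ZMod 2), ((0:ℤ) : ZMod 2)) := by norm_num [hv]
      rw [this, hΨ'cast]
      module
    · show Ψ (Φ (Abelianization.of (PresentedGroup.of 1))) = Abelianization.of (PresentedGroup.of 1)
      rw [hΦof 1, hΨofAdd]
      apply Additive.ofMul.injective
      show Ψ' (v 1) = y
      have : v 1 = (((0:ℤ) : ZMod N), ((1:ℤ) : ZMod 2), ((0:ℤ) : ZMod 2)) := by norm_num [hv]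
      rw [this, hΨ'cast]
      module
    · show Ψ (Φ (Abelianization.of (PresentedGroup.of 2))) = Abelianization.of (PresentedGroup.of 2)
      rw [hΦof 2, hΨofAdd]
      apply Additive.ofMul.injective
      show Ψ' (v 2) = z
      have : v 2 = (((r:ℤ) : ZMod N), ((0:ℤ) : ZMod 2), ((1:ℤ) : ZMod 2)) := by norm_num [hv]; rfl
      rw [this, hΨ'cast]
      rw [hw0]
      module
  have hright : Φ.comp Ψ = MonoidHom.id (Multiplicative (ZMod N × ZMod 2 × ZMod 2)) := by
    refine MonoidHom.ext fun p => ?_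
    obtain ⟨i, hi⟩ := ZMod.intCast_surjective (Multiplicative.toAdd p).1
    obtain ⟨j, hj⟩ := ZMod.intCast_surjective (Multiplicative.toAdd p).2.1
    obtain ⟨l, hl⟩ := ZMod.intCast_surjective (Multiplicative.toAdd p).2.2
    have hp : p = Multiplicative.ofAdd ((i : ZMod N), (j : ZMod 2), (l : ZMod 2)) := by
      rw [hi, hj, hl]
      simp
    rw [MonoidHom.comp_apply, MonoidHom.id_apply, hp, hΨofAdd, hΨ'cast]
    have htm : Additive.toMul (i • x + (j • y + l • w)) =
        (Additive.toMul x) ^ i * ((Additive.toMul y) ^ j *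
          ((Additive.toMul z) / (Additive.toMul x) ^ r) ^ l) := by
      rw [hw0]
      simp [toMul_add, toMul_zsmul, toMul_sub, div_eq_mul_inv]
    rw [htm]
    have hx' : Additive.toMul x = Abelianization.of (PresentedGroup.of 0) := rfl
    have hy' : Additive.toMul y = Abelianization.of (PresentedGroup.of 1) := rfl
    have hz' : Additive.toMul z = Abelianization.of (PresentedGroup.of 2) := rfl
    rw [hx', hy', hz']
    simp only [map_mul, map_zpow, map_div, hΦof 0, hΦof 1, hΦof 2]
    apply Multiplicative.toAdd.injective
    simp only [toAdd_mul, toAdd_div, toAdd_zpow, toAdd_ofAdd]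
    have hv0 : v 0 = (1, 0, 0) := by norm_num [hv]
    have hv1 : v 1 = (0, 1, 0) := by norm_num [hv]
    have hv2 : v 2 = ((r : ZMod N), 0, 1) := by norm_num [hv]; rfl
    rw [hv0, hv1, hv2]
    refine Prod.ext ?_ (Prod.ext ?_ ?_) <;>
      simp only [Prod.smul_mk, Prod.mk_sub_mk, Prod.mk_add_mk, Prod.fst, Prod.snd,
        Prod.fst_add, Prod.snd_add, Prod.fst_sub, Prod.snd_sub, zsmul_eq_mul,
        smul_eq_mul] <;>
      push_cast <;>
      ring
  exact ⟨MonoidHom.toMulEquiv Φ Ψ hleft hright⟩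

theorem stmt18 (r s t u : ℤ) (hr : 0 < r) (hs : 0 < s) (ht : 0 < t) (hu : 0 < u)
    (h : r * u - s * t = 1 ∨ r * u - s * t = -1) :
    (Odd s → Nonempty (Abelianization (SapphireGroup r s t u) ≃*
      Multiplicative (ZMod (4 * t).toNat × ZMod 4))) ∧
    (Even s → Nonempty (Abelianization (SapphireGroup r s t u) ≃*
      Multiplicative (ZMod (4 * t).toNat × ZMod 2 × ZMod 2))) :=
  ⟨fun hodd => sapphire_odd r s t u ht hodd, fun heven => sapphire_even r s t u ht heven⟩
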